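/- Caro–Wei theorem: every finite simple undirected graph G = (V, E) contains an independent set of size at least ∑_{v ∈ V} 1/(1 + deg(v)). -/

import Mathlib

lemma caro_wei_aux {V : Type*} [Fintype V] [DecidableEq V]
    (G : SimpleGraph V) [DecidableRel G.Adj] :
    ∀ n (s : Finset V), s.card ≤ n →
      ∃ I : Finset V, I ⊆ s ∧ (∀ u ∈ I, ∀ w ∈ I, ¬ G.Adj u w) ∧
        ∑ v ∈ s, (1 : ℝ) / (1 + ((s.filter (G.Adj v)).card : ℝ)) ≤ (I.card : ℝ) := by
  intro n
  induction n with
  | zero =>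
    intro s hs
    have : s = ∅ := Finset.card_eq_zero.mp (Nat.le_zero.mp hs)
    subst this
    exact ⟨∅, Finset.Subset.refl _, by simp, by simp⟩
  | succ n ih =>
    intro s hs
    rcases s.eq_empty_or_nonempty with rfl | hne
    · exact ⟨∅, Finset.Subset.refl _, by simp, by simp⟩
    · obtain ⟨v, hv, hvmin⟩ := s.exists_min_image
        (fun u => ((s.filter (G.Adj u)).card : ℝ)) hne
      set N : Finset V := insert v (s.filter (G.Adj v)) with hN
      have hNsub : N ⊆ s := by
        intro x hx
        rcases Finset.mem_insert.mp hx with rfl | hx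
        · exact hv
        · exact (Finset.mem_filter.mp hx).1
      set t : Finset V := s \ N with ht
      have htsub : t ⊆ s := Finset.sdiff_subset
      have hvN : v ∈ N := Finset.mem_insert_self _ _
      have htcard : t.card ≤ n := by
        have h1 : t.card < s.card := by
          apply Finset.card_lt_card
          constructor
          · exact htsub
          · intro hss
            exact (Finset.mem_sdiff.mp (hss hv)).2 hvN
        omega
      obtain ⟨I, hIsub, hIind, hIsum⟩ := ih t htcard
      have hvnotI : v ∉ I := fun h => (Finset.mem_sdiff.mp (hIsub h)).2 hvN
      refine ⟨insert v I, ?_, ?_, ?_⟩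
      · intro x hx
        rcases Finset.mem_insert.mp hx with rfl | hx
        · exact hv
        · exact htsub (hIsub hx)
      · -- independence
        have hnadj : ∀ u ∈ I, ¬ G.Adj v u := by
          intro u hu hadj
          have := (Finset.mem_sdiff.mp (hIsub hu)).2
          exact this (Finset.mem_insert_of_mem
            (Finset.mem_filter.mpr ⟨htsub (hIsub hu), hadj⟩))
        intro u hu w hw
        rcases Finset.mem_insert.mp hu with rfl | hu
        · rcases Finset.mem_insert.mp hw with rfl | hw
          · exact fun h => G.irrefl h
          · exact hnadj w hw
        · rcases Finset.mem_insert.mp hw with hwv | hw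
          · exact fun h => hnadj u hu (G.adj_symm (hwv ▸ h))
          · exact hIind u hu w hw
      · -- sum bound
        have hsplit : ∑ u ∈ s \ N, (1 : ℝ) / (1 + ((s.filter (G.Adj u)).card : ℝ))
            + ∑ u ∈ N, (1 : ℝ) / (1 + ((s.filter (G.Adj u)).card : ℝ))
            = ∑ u ∈ s, (1 : ℝ) / (1 + ((s.filter (G.Adj u)).card : ℝ)) :=
          Finset.sum_sdiff hNsub
        have hNcard : (N.card : ℝ) = 1 + ((s.filter (G.Adj v)).card : ℝ) := by
          rw [hN, Finset.card_insert_of_notMem (by simp [G.irrefl])]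
          push_cast; ring
        have hdvpos : (0 : ℝ) < 1 + ((s.filter (G.Adj v)).card : ℝ) := by positivity
        have hNbound : ∑ u ∈ N, (1 : ℝ) / (1 + ((s.filter (G.Adj u)).card : ℝ)) ≤ 1 := by
          calc ∑ u ∈ N, (1 : ℝ) / (1 + ((s.filter (G.Adj u)).card : ℝ))
              ≤ ∑ _u ∈ N, (1 : ℝ) / (1 + ((s.filter (G.Adj v)).card : ℝ)) := by
                apply Finset.sum_le_sum
                intro u hu
                apply one_div_le_one_div_of_le hdvpos
                have := hvmin u (hNsub hu)
                linarith
            _ = (N.card : ℝ) / (1 + ((s.filter (G.Adj v)).card : ℝ)) := by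
                rw [Finset.sum_const, nsmul_eq_mul]; ring
            _ = 1 := by rw [hNcard]; field_simp
        have htbound : ∑ u ∈ t, (1 : ℝ) / (1 + ((s.filter (G.Adj u)).card : ℝ))
            ≤ ∑ u ∈ t, (1 : ℝ) / (1 + ((t.filter (G.Adj u)).card : ℝ)) := by
          apply Finset.sum_le_sum
          intro u _
          apply one_div_le_one_div_of_le (by positivity)
          have : (t.filter (G.Adj u)).card ≤ (s.filter (G.Adj u)).card :=
            Finset.card_le_card (Finset.filter_subset_filter _ htsub)
          have h2 : ((t.filter (G.Adj u)).card : ℝ) ≤ ((s.filter (G.Adj u)).card : ℝ) := by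
            exact_mod_cast this
          linarith
        have hcard : ((insert v I).card : ℝ) = I.card + 1 := by
          rw [Finset.card_insert_of_notMem hvnotI]; push_cast; ring
        rw [hcard, ← hsplit]
        have : ∑ u ∈ s \ N, (1 : ℝ) / (1 + ((s.filter (G.Adj u)).card : ℝ)) ≤ (I.card : ℝ) := by
          calc ∑ u ∈ s \ N, (1 : ℝ) / (1 + ((s.filter (G.Adj u)).card : ℝ))
              ≤ ∑ u ∈ t, (1 : ℝ) / (1 + ((t.filter (G.Adj u)).card : ℝ)) := htbound
            _ ≤ (I.card : ℝ) := hIsum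
        linarith

/-- Caro–Wei theorem: every finite simple graph contains an independent set of size at least
`∑_v 1 / (1 + deg v)`. -/
theorem caro_wei {V : Type*} [Fintype V] [DecidableEq V]
    (G : SimpleGraph V) [DecidableRel G.Adj] :
    ∃ I : Finset V, (∀ u ∈ I, ∀ w ∈ I, ¬ G.Adj u w) ∧
      ∑ v : V, (1 : ℝ) / (1 + (G.degree v : ℝ)) ≤ (I.card : ℝ) := by
  obtain ⟨I, _, hind, hsum⟩ := caro_wei_aux G (Finset.univ.card) Finset.univ le_rfl
  refine ⟨I, hind, ?_⟩
  have heq : ∀ v : V, (Finset.univ.filter (G.Adj v)).card = G.degree v := by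
    intro v
    rw [← SimpleGraph.card_neighborFinset_eq_degree]
    congr 1
    ext w
    simp [SimpleGraph.mem_neighborFinset]
  simp only [heq] at hsum
  exact hsum
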